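/- Let λ be a Lagrangian subspace of H and let K be a compact set of orthogonal projections of H (with the operator-norm topology) such that the range of every P ∈ K is a Lagrangian subspace forming a Fredholm pair with λ. Then there exists a closed subspace W of λ, of finite codimension in λ, such that range(P) ∩ W = {0} for every P ∈ K. -/

import Mathlib

open scoped RealInnerProductSpace

/-- The annihilator of a set `μ` with respect to the symplectic form `ω(x, y) = ⟪J x, y⟫`. -/
def omegaAnn {H : Type*} [NormedAddCommGroup H] [InnerProductSpace ℝ H]
    (J : H →L[ℝ] H) (μ : Set H) : Set H :=
  {x : H | ∀ y ∈ μ, ⟪J x, y⟫ = 0}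

/-- A pair of closed subspaces is a Fredholm pair if their intersection is finite-dimensional
and their sum is closed and of finite codimension. -/
def IsFredholmPair {H : Type*} [NormedAddCommGroup H] [InnerProductSpace ℝ H]
    (μ ν : Submodule ℝ H) : Prop :=
  FiniteDimensional ℝ ↥(μ ⊓ ν) ∧ IsClosed ((μ ⊔ ν : Submodule ℝ H) : Set H) ∧
    FiniteDimensional ℝ (H ⧸ (μ ⊔ ν))

section Aux

private lemma aux_norm_bound {H : Type*} [NormedAddCommGroup H] [NormedSpace ℝ H]
    [CompleteSpace H] (μ W : Submodule ℝ H) (hμ : IsClosed (μ : Set H))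
    (hW : IsClosed (W : Set H)) (hdisj : μ ⊓ W = ⊥)
    (hsum : IsClosed ((μ ⊔ W : Submodule ℝ H) : Set H)) :
    ∃ C > 0, ∀ u ∈ μ, ∀ w ∈ W, ‖w‖ ≤ C * ‖u + w‖ := by
  haveI : CompleteSpace (μ ⊔ W : Submodule ℝ H) := hsum.completeSpace_coe
  haveI : CompleteSpace μ := hμ.completeSpace_coe
  haveI : CompleteSpace W := hW.completeSpace_coe
  have hcont : Continuous (fun p : μ × W => ((p.1 : H) + p.2)) :=
    ((continuous_subtype_val.comp continuous_fst).add (continuous_subtype_val.comp continuous_snd))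
  let φL : (↥μ × ↥W) →ₗ[ℝ] (μ ⊔ W : Submodule ℝ H) :=
    { toFun := fun p => ⟨(p.1 : H) + p.2,
        add_mem (Submodule.mem_sup_left p.1.2) (Submodule.mem_sup_right p.2.2)⟩
      map_add' := fun p q => Subtype.ext (by
        simp only [Prod.fst_add, Prod.snd_add, Submodule.coe_add]; abel)
      map_smul' := fun c p => Subtype.ext (by
        simp only [Prod.smul_fst, Prod.smul_snd, Submodule.coe_smul, RingHom.id_apply,
          smul_add]) }
  let φ : (↥μ × ↥W) →L[ℝ] (μ ⊔ W : Submodule ℝ H) := ⟨φL, hcont.subtype_mk _⟩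
  have hker : LinearMap.ker (φ : (↥μ × ↥W) →ₗ[ℝ] (μ ⊔ W : Submodule ℝ H)) = ⊥ := by
    rw [LinearMap.ker_eq_bot']
    rintro ⟨u, w⟩ h
    have h0 : (u : H) + w = 0 := by
      have h' := congrArg Subtype.val h
      simpa [φ, φL] using h'
    have huW : (u : H) ∈ W := by
      have hne : (u : H) = -(w : H) := eq_neg_of_add_eq_zero_left h0
      rw [hne]; exact neg_mem w.2
    have hu0 : (u : H) = 0 := by
      have : (u : H) ∈ (⊥ : Submodule ℝ H) := hdisj ▸ Submodule.mem_inf.mpr ⟨u.2, huW⟩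
      simpa using this
    have hw0 : (w : H) = 0 := by rw [hu0, zero_add] at h0; exact h0
    exact Prod.ext (Subtype.ext hu0) (Subtype.ext hw0)
  have hrange : LinearMap.range (φ : (↥μ × ↥W) →ₗ[ℝ] (μ ⊔ W : Submodule ℝ H)) = ⊤ := by
    rw [LinearMap.range_eq_top]
    rintro ⟨z, hz⟩
    obtain ⟨u, hu, w, hw, huw⟩ := Submodule.mem_sup.mp hz
    exact ⟨(⟨u, hu⟩, ⟨w, hw⟩), Subtype.ext huw⟩
  let e := ContinuousLinearEquiv.ofBijective φ hker hrange
  refine ⟨‖(e.symm : (μ ⊔ W : Submodule ℝ H) →L[ℝ] ↥μ × ↥W)‖ + 1, by positivity, ?_⟩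
  intro u hu w hw
  set z : (μ ⊔ W : Submodule ℝ H) :=
    ⟨u + w, add_mem (Submodule.mem_sup_left hu) (Submodule.mem_sup_right hw)⟩ with hz
  have hez : e.symm z = (⟨u, hu⟩, ⟨w, hw⟩) := by
    apply e.injective
    rw [e.apply_symm_apply]
    rfl
  have h1 : ‖w‖ ≤ ‖e.symm z‖ := by rw [hez]; exact norm_snd_le ((⟨u, hu⟩, ⟨w, hw⟩) : ↥μ × ↥W)
  have h2 : ‖e.symm z‖ ≤ ‖(e.symm : (μ ⊔ W : Submodule ℝ H) →L[ℝ] ↥μ × ↥W)‖ * ‖z‖ :=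
    (e.symm : (μ ⊔ W : Submodule ℝ H) →L[ℝ] ↥μ × ↥W).le_opNorm z
  have h3 : ‖z‖ = ‖u + w‖ := rfl
  have h4 : (0:ℝ) ≤ ‖(e.symm : (μ ⊔ W : Submodule ℝ H) →L[ℝ] ↥μ × ↥W)‖ := norm_nonneg _
  have h5 : (0:ℝ) ≤ ‖u + w‖ := norm_nonneg _
  nlinarith [h1, h2]

private lemma aux_quot_inf {M : Type*} [AddCommGroup M] [Module ℝ M] (p q : Submodule ℝ M)
    (hp : FiniteDimensional ℝ (M ⧸ p)) (hq : FiniteDimensional ℝ (M ⧸ q)) :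
    FiniteDimensional ℝ (M ⧸ (p ⊓ q)) := by
  have hker : LinearMap.ker ((p.mkQ).prod (q.mkQ)) = p ⊓ q := by
    rw [LinearMap.ker_prod, Submodule.ker_mkQ, Submodule.ker_mkQ]
  have hinj := Submodule.ker_liftQ_eq_bot (p ⊓ q) ((p.mkQ).prod (q.mkQ)) hker.ge hker.le
  exact FiniteDimensional.of_injective _ (LinearMap.ker_eq_bot.mp hinj)

private lemma aux_quot_iInf {M : Type*} [AddCommGroup M] [Module ℝ M] {ι : Type*}
    (t : Finset ι) (p : ι → Submodule ℝ M)
    (h : ∀ i ∈ t, FiniteDimensional ℝ (M ⧸ p i)) :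
    FiniteDimensional ℝ (M ⧸ ⨅ i ∈ t, p i) := by
  classical
  induction t using Finset.induction_on with
  | empty =>
      have htop : (⨅ i ∈ (∅ : Finset ι), p i) = ⊤ := by simp
      rw [htop]
      haveI : Subsingleton (M ⧸ (⊤ : Submodule ℝ M)) :=
        Submodule.Quotient.subsingleton_iff.mpr rfl
      infer_instance
  | @insert a s ha ih =>
      rw [Finset.iInf_insert]
      exact aux_quot_inf _ _ (h a (Finset.mem_insert_self a s))
        (ih fun i hi => h i (Finset.mem_insert_of_mem hi))

private lemma aux_mem_range {H : Type*} [NormedAddCommGroup H] [InnerProductSpace ℝ H]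
    (P : H →L[ℝ] H) (hP : P.comp P = P) (x : H) :
    x ∈ LinearMap.range (P : H →ₗ[ℝ] H) ↔ P x = x := by
  constructor
  · rintro ⟨y, rfl⟩
    have := ContinuousLinearMap.ext_iff.mp hP y
    simpa [ContinuousLinearMap.comp_apply] using this
  · intro h
    exact ⟨x, h⟩

private lemma aux_point {H : Type*} [NormedAddCommGroup H] [InnerProductSpace ℝ H]
    [CompleteSpace H] (lam : Submodule ℝ H) (hlamc : IsClosed (lam : Set H))
    (P₀ : H →L[ℝ] H) (hP₀ : P₀.comp P₀ = P₀)
    (hFred : IsFredholmPair (LinearMap.range (P₀ : H →ₗ[ℝ] H)) lam) :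
    ∃ (W : Submodule ℝ H) (δ : ℝ), 0 < δ ∧ W ≤ lam ∧ IsClosed (W : Set H) ∧
      FiniteDimensional ℝ (↥lam ⧸ (W.comap lam.subtype)) ∧
      ∀ P : H →L[ℝ] H, P.comp P = P → ‖P - P₀‖ < δ →
        LinearMap.range (P : H →ₗ[ℝ] H) ⊓ W = ⊥ := by
  set μ := LinearMap.range (P₀ : H →ₗ[ℝ] H) with hμdef
  have hμc : IsClosed ((μ : Submodule ℝ H) : Set H) := by
    have hset : ((μ : Submodule ℝ H) : Set H) = {x | P₀ x = x} := by
      ext x; exact aux_mem_range P₀ hP₀ x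
    rw [hset]
    exact isClosed_eq P₀.continuous continuous_id
  haveI hFdim : FiniteDimensional ℝ ↥(μ ⊓ lam) := hFred.1
  set F := μ ⊓ lam with hF
  haveI : CompleteSpace F := FiniteDimensional.complete ℝ F
  set W := lam ⊓ Fᗮ with hWdef
  have hWle : W ≤ lam := inf_le_left
  have hWc : IsClosed (W : Set H) := by
    rw [hWdef, Submodule.coe_inf]
    exact hlamc.inter F.isClosed_orthogonal
  have hcodim : FiniteDimensional ℝ (↥lam ⧸ W.comap lam.subtype) := by
    let g : ↥lam →ₗ[ℝ] F := (F.orthogonalProjectionOnto).toLinearMap ∘ₗ lam.subtype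
    have hkerg : LinearMap.ker g = W.comap lam.subtype := by
      ext x
      simp only [LinearMap.mem_ker, LinearMap.coe_comp, Function.comp_apply,
        Submodule.coe_subtype, ContinuousLinearMap.coe_coe, Submodule.mem_comap, hWdef,
        Submodule.mem_inf, g]
      rw [Submodule.orthogonalProjectionOnto_eq_zero_iff]
      exact ⟨fun h => ⟨x.2, h⟩, fun h => h.2⟩
    have h1 : FiniteDimensional ℝ (↥lam ⧸ LinearMap.ker g) :=
      (LinearMap.quotKerEquivRange g).symm.finiteDimensional
    rwa [hkerg] at h1
  have hdisj : μ ⊓ W = ⊥ := by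
    rw [hWdef, ← inf_assoc, ← hF]
    exact (Submodule.orthogonal_disjoint F).eq_bot
  have hsumeq : μ ⊔ W = μ ⊔ lam := by
    refine le_antisymm (sup_le_sup_left hWle μ) (sup_le le_sup_left ?_)
    intro x hx
    have hproj : ((F.orthogonalProjectionOnto x : H)) ∈ F := Submodule.coe_mem _
    have h1 : (F.orthogonalProjectionOnto x : H) ∈ μ := (Submodule.mem_inf.mp hproj).1
    have h2 : x - (F.orthogonalProjectionOnto x : H) ∈ Fᗮ :=
      F.sub_starProjection_mem_orthogonal x
    have h3 : x - (F.orthogonalProjectionOnto x : H) ∈ lam :=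
      lam.sub_mem hx (Submodule.mem_inf.mp hproj).2
    have hxeq : x = (F.orthogonalProjectionOnto x : H) + (x - (F.orthogonalProjectionOnto x : H)) := by
      abel
    rw [hxeq]
    exact Submodule.add_mem_sup h1 (Submodule.mem_inf.mpr ⟨h3, h2⟩)
  have hsumc : IsClosed ((μ ⊔ W : Submodule ℝ H) : Set H) := by
    rw [hsumeq]; exact hFred.2.1
  obtain ⟨C, hC, hbound⟩ := aux_norm_bound μ W hμc hWc hdisj hsumc
  refine ⟨W, C⁻¹, inv_pos.mpr hC, hWle, hWc, hcodim, ?_⟩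
  intro P hP hPnear
  rw [eq_bot_iff]
  intro x hx
  obtain ⟨hx1, hx2⟩ := Submodule.mem_inf.mp hx
  have hPx : P x = x := (aux_mem_range P hP x).mp hx1
  have hub : ‖x‖ ≤ C * ‖(-(P₀ x)) + x‖ :=
    hbound _ (neg_mem (LinearMap.mem_range_self (P₀ : H →ₗ[ℝ] H) x)) _ hx2
  have heq : (-(P₀ x)) + x = (P - P₀) x := by
    rw [ContinuousLinearMap.sub_apply, hPx]; abel
  rw [heq] at hub
  have h2 : ‖(P - P₀) x‖ ≤ ‖P - P₀‖ * ‖x‖ := (P - P₀).le_opNorm x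
  have hx0 : x = 0 := by
    by_contra hne
    have hpos : 0 < ‖x‖ := norm_pos_iff.mpr hne
    have hlt : C * ‖P - P₀‖ < 1 := by
      have h3 := mul_lt_mul_of_pos_left hPnear hC
      rwa [mul_inv_cancel₀ hC.ne'] at h3
    nlinarith [mul_le_mul_of_nonneg_left h2 hC.le, hub, hlt, hpos]
  simpa using hx0
end Aux

/-- For a compact set `K` of orthogonal projections whose ranges are Lagrangians forming
Fredholm pairs with `λ`, there is a closed finite-codimensional subspace `W` of `λ` with
`range P ∩ W = {0}` for all `P ∈ K`. -/
theorem compact_family_admits_common_finite_codim_complement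
    {H : Type*} [NormedAddCommGroup H] [InnerProductSpace ℝ H] [CompleteSpace H]
    (J : H →L[ℝ] H) (hJ2 : ∀ x : H, J (J x) = -x)
    (hJorth : ∀ x y : H, ⟪J x, J y⟫ = ⟪x, y⟫)
    (lam : Submodule ℝ H) (hlam : omegaAnn J (lam : Set H) = (lam : Set H))
    (K : Set (H →L[ℝ] H)) (hK : IsCompact K)
    (hKproj : ∀ P ∈ K, (∀ x y : H, ⟪P x, y⟫ = ⟪x, P y⟫) ∧ P.comp P = P ∧
      omegaAnn J (Set.range ⇑P) = Set.range ⇑P ∧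
      IsFredholmPair (LinearMap.range (P : H →ₗ[ℝ] H)) lam) :
    ∃ W : Submodule ℝ H, W ≤ lam ∧ IsClosed (W : Set H) ∧
      FiniteDimensional ℝ (↥lam ⧸ (W.comap lam.subtype)) ∧
      ∀ P ∈ K, LinearMap.range (P : H →ₗ[ℝ] H) ⊓ W = ⊥ := by
  classical
  have hlamc : IsClosed (lam : Set H) := by
    rw [← hlam]
    have hset : omegaAnn J (lam : Set H) = ⋂ y ∈ (lam : Set H), (fun x => ⟪J x, y⟫) ⁻¹' {0} := by
      ext x; simp [omegaAnn]
    rw [hset]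
    exact isClosed_biInter fun y _ =>
      isClosed_singleton.preimage (Continuous.inner J.continuous continuous_const)
  have hmain : ∀ P₀ : H →L[ℝ] H, ∃ (W : Submodule ℝ H) (δ : ℝ), 0 < δ ∧
      (P₀ ∈ K → W ≤ lam ∧ IsClosed (W : Set H) ∧
        FiniteDimensional ℝ (↥lam ⧸ W.comap lam.subtype) ∧
        ∀ P ∈ K, ‖P - P₀‖ < δ → LinearMap.range (P : H →ₗ[ℝ] H) ⊓ W = ⊥) := by
    intro P₀
    by_cases h : P₀ ∈ K
    · obtain ⟨W, δ, hδ, h1, h2, h3, h4⟩ :=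
        aux_point lam hlamc P₀ ((hKproj P₀ h).2.1) ((hKproj P₀ h).2.2.2)
      exact ⟨W, δ, hδ, fun _ =>
        ⟨h1, h2, h3, fun P hP hnear => h4 P ((hKproj P hP).2.1) hnear⟩⟩
    · exact ⟨⊥, 1, one_pos, fun hh => absurd hh h⟩
  choose Wf δf hδf hprop using hmain
  obtain ⟨t, htK, hcover⟩ := hK.elim_nhds_subcover (fun P₀ => Metric.ball P₀ (δf P₀))
    (fun P₀ _ => Metric.ball_mem_nhds _ (hδf P₀))
  refine ⟨lam ⊓ ⨅ P₀ ∈ t, Wf P₀, inf_le_left, ?_, ?_, ?_⟩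
  · rw [Submodule.coe_inf]
    refine hlamc.inter ?_
    rw [Submodule.coe_iInf]
    refine isClosed_iInter fun P₀ => ?_
    rw [Submodule.coe_iInf]
    exact isClosed_iInter fun hP₀ => (hprop P₀ (htK _ hP₀)).2.1
  · have hcomap : (lam ⊓ ⨅ P₀ ∈ t, Wf P₀).comap lam.subtype
        = ⨅ P₀ ∈ t, (Wf P₀).comap lam.subtype := by
      simp [Submodule.comap_inf, Submodule.comap_iInf, Submodule.comap_subtype_self]
    rw [hcomap]
    exact aux_quot_iInf t _ fun P₀ hP₀ => (hprop P₀ (htK _ hP₀)).2.2.1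
  · intro P hP
    obtain ⟨P₀, hP₀t, hPball⟩ := Set.mem_iUnion₂.mp (hcover hP)
    have hWle : lam ⊓ ⨅ Q ∈ t, Wf Q ≤ Wf P₀ :=
      inf_le_right.trans (biInf_le _ hP₀t)
    have hbot := (hprop P₀ (htK _ hP₀t)).2.2.2 P hP
      (by simpa [dist_eq_norm] using Metric.mem_ball.mp hPball)
    exact le_bot_iff.mp (le_trans (inf_le_inf_left _ hWle) hbot.le)
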